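/- For every tiling instance T = (T,H,V,t0) and every n ∈ ℕ, there exists a proper tiling f of the 2^n × 2^n grid (f(0,0)=t0 and all horizontal constraints H and vertical constraints V satisfied) if and only if the ABEB formula β^n_T := α^n ∧ □^n( φ1 ∧ □φ1 ∧ □□φ1 ∧ ◇◇◇⊤ ∧ ψ0 ∧ ψ1 ∧ ψ2 ∧ ψ3 ) (with components defined in the context) is satisfiable in an increasing domain model. -/

import Mathlib

set_option maxHeartbeats 1000000

/-! ## Syntax of first-order modal logic (FOML)

Predicate symbols and variables are represented by natural numbers; an atom
`atom p args` applies the predicate symbol `p` to the list of variables `args`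
(the arity of `p` in this occurrence is the length of `args`). -/
inductive Formula : Type where
  | atom (p : ℕ) (args : List ℕ)
  | neg  (φ : Formula)
  | and  (φ ψ : Formula)
  | or   (φ ψ : Formula)
  | box  (φ : Formula)
  | dia  (φ : Formula)
  | ex   (x : ℕ) (φ : Formula)
  | all  (x : ℕ) (φ : Formula)
deriving DecidableEq

namespace Formula

def imp (φ ψ : Formula) : Formula := .or φ.neg ψ
def biimp (φ ψ : Formula) : Formula := .and (imp φ ψ) (imp ψ φ)
/-- a fixed tautology `⊤` -/
def top : Formula := .or (.atom 0 []) (.neg (.atom 0 []))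
/-- a fixed contradiction `⊥` -/
def bot : Formula := .and (.atom 0 []) (.neg (.atom 0 []))

end Formula

def bigAnd (l : List Formula) : Formula := l.foldr Formula.and Formula.top
def bigOr  (l : List Formula) : Formula := l.foldr Formula.or Formula.bot

/-! ## Semantics: Kripke structures with world-relative domains -/

structure Model where
  W : Type
  D : Type
  R : W → W → Prop
  dom : W → Set D
  ρ : W → ℕ → Set (List D)

/-- `M` is an increasing domain model: nonempty countable set of worlds, nonempty
countable domain, nonempty local domains that increase along the accessibility
relation, and interpretations of predicates at a world take values in the local
domain of that world. -/
def Model.Increasing (M : Model) : Prop :=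
  Nonempty M.W ∧ Nonempty M.D ∧ Countable M.W ∧ Countable M.D ∧
    (∀ w, (M.dom w).Nonempty) ∧
    (∀ w v, M.R w v → M.dom w ⊆ M.dom v) ∧
    (∀ w p l, l ∈ M.ρ w p → ∀ d ∈ l, d ∈ M.dom w)

def Model.sat (M : Model) : M.W → (ℕ → M.D) → Formula → Prop
  | w, σ, .atom p args => args.map σ ∈ M.ρ w p
  | w, σ, .neg φ => ¬ M.sat w σ φ
  | w, σ, .and φ ψ => M.sat w σ φ ∧ M.sat w σ ψ
  | w, σ, .or φ ψ => M.sat w σ φ ∨ M.sat w σ ψ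
  | w, σ, .box φ => ∀ v, M.R w v → M.sat v σ φ
  | w, σ, .dia φ => ∃ v, M.R w v ∧ M.sat v σ φ
  | w, σ, .ex x φ => ∃ d ∈ M.dom w, M.sat w (Function.update σ x d) φ
  | w, σ, .all x φ => ∀ d ∈ M.dom w, M.sat w (Function.update σ x d) φ

/-- the assignment `σ` is relevant at the world `w` -/
def Model.relevant (M : Model) (w : M.W) (σ : ℕ → M.D) : Prop := ∀ x, σ x ∈ M.dom w

/-- satisfiability over increasing domain models -/
def Satisfiable (φ : Formula) : Prop :=
  ∃ (M : Model), M.Increasing ∧ ∃ (w : M.W) (σ : ℕ → M.D), M.relevant w σ ∧ M.sat w σ φ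
/-! ## The ABEB formulas forcing exponentially many elements

Unary predicates `P_0, …, P_{n-1}` are the predicate symbols `0, …, n-1`;
variables: `x := 0` and `y_i := 1 + i`. -/

/-- the unary atom `P_i(x)` -/
def atomPU (i x : ℕ) : Formula := .atom i [x]

/-- `φ0 := ∃x □ ⋀_{0≤i<n} ¬P_i(x)` -/
def phiZero (n : ℕ) : Formula :=
  .ex 0 (.box (bigAnd ((List.range n).map fun i => .neg (atomPU i 0))))

/-- `φ1 := ∀x □ ⋀_{0≤i<n} ((P_i(x) → □P_i(x)) ∧ (¬P_i(x) → □¬P_i(x)))` -/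
def phiOne (n : ℕ) : Formula :=
  .all 0 (.box (bigAnd ((List.range n).map fun i =>
    .and ((atomPU i 0).imp (.box (atomPU i 0)))
      ((Formula.neg (atomPU i 0)).imp (.box (.neg (atomPU i 0)))))))

/-- `φ2 := ∀x □ ⋀_{0≤i<n} ( ¬P_i(x) → ∃y_i □( P_i(y_i) ∧ ⋀_{j≠i}(P_j(x) ↔ P_j(y_i)) ) )` -/
def phiTwo (n : ℕ) : Formula :=
  .all 0 (.box (bigAnd ((List.range n).map fun i =>
    (Formula.neg (atomPU i 0)).imp
      (.ex (1 + i) (.box (.and (atomPU i (1 + i))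
        (bigAnd (((List.range n).filter (fun j => decide (j ≠ i))).map fun j =>
          (atomPU j 0).biimp (atomPU j (1 + i))))))))))

/-- `□^{≤0}ψ := ⊤` and `□^{≤n}ψ := ψ ∧ □(□^{≤n-1}ψ)` -/
def boxLe : ℕ → Formula → Formula
  | 0, _ => .top
  | n + 1, ψ => .and ψ (.box (boxLe n ψ))

/-- `α^n := φ0 ∧ □^{≤n}(φ1 ∧ φ2 ∧ ◇⊤)` -/
def alphaN (n : ℕ) : Formula :=
  .and (phiZero n) (boxLe n (.and (phiOne n) (.and (phiTwo n) (.dia .top))))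

/-- `atDist M r j w` : there is a path of length `j` from `r` to `w` -/
def atDist (M : Model) (r : M.W) : ℕ → M.W → Prop
  | 0, w => w = r
  | j + 1, w => ∃ v, atDist M r j v ∧ M.R v w

/-- the number of `1`-bits of a binary string of length `n` -/
def onesCount {n : ℕ} (s : Fin n → Bool) : ℕ :=
  (Finset.univ.filter fun k => s k = true).card
/-! ## Exponential tiling and its ABEB encoding

A tiling instance `(T, H, V, t0)`; tiles are `Fin numTiles`. -/

structure TilingInstance where
  numTiles : ℕ
  t0 : Fin numTiles
  H : Finset (Fin numTiles × Fin numTiles)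
  V : Finset (Fin numTiles × Fin numTiles)

/-- a proper tiling of the `2^n × 2^n` grid -/
def ProperTiling2 (T : TilingInstance) (n : ℕ) (f : ℕ → ℕ → Fin T.numTiles) : Prop :=
  f 0 0 = T.t0 ∧
    (∀ i j, i + 1 < 2 ^ n → j < 2 ^ n → (f i j, f (i + 1) j) ∈ T.H) ∧
    (∀ i j, i < 2 ^ n → j + 1 < 2 ^ n → (f i j, f i (j + 1)) ∈ T.V)

/-- the binary atom `Q_t(x,y)` (grid point `(x,y)` carries tile `t`); the
predicate symbols `0,…,n-1` are the bit predicates `P_i`, and `n + t` is `Q_t` -/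
def atomQT (n : ℕ) {m : ℕ} (t : Fin m) (x y : ℕ) : Formula := .atom (n + (t : ℕ)) [x, y]

/-- `succ(x,y)` : the `n`-bit number encoded by `y` is the successor of the one
encoded by `x` -/
def succF (n x y : ℕ) : Formula :=
  bigOr ((List.range n).map fun i =>
    bigAnd ([Formula.neg (atomPU i x), atomPU i y]
      ++ ((List.range n).filter (fun j => decide (j < i))).map
          (fun j => Formula.and (atomPU j x) (.neg (atomPU j y)))
      ++ ((List.range n).filter (fun j => decide (i < j))).map
          (fun j => (atomPU j x).biimp (atomPU j y))))

/-- `ψ0 := ∀x□□□( ⋀_{i<n}¬P_i(x) → Q_{t0}(x,x) )` -/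
def psi0 (T : TilingInstance) (n : ℕ) : Formula :=
  .all 0 (.box (.box (.box
    ((bigAnd ((List.range n).map fun i => .neg (atomPU i 0))).imp
      (atomQT n T.t0 0 0)))))

/-- `ψ1 := ∀x□∀y□□( ⋁_t( Q_t(x,y) ∧ ⋀_{t'≠t}¬Q_{t'}(x,y) ) )` -/
def psi1 (T : TilingInstance) (n : ℕ) : Formula :=
  .all 0 (.box (.all 1 (.box (.box
    (bigOr ((List.finRange T.numTiles).map fun t =>
      .and (atomQT n t 0 1)
        (bigAnd (((List.finRange T.numTiles).filter (fun t' => decide (t' ≠ t))).map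
          fun t' => .neg (atomQT n t' 0 1)))))))))

/-- `ψ2 := ∀x□∀y□∀z□( succ(x,y) → ⋁_{(t,t')∈H}( Q_t(x,z) ∧ Q_{t'}(y,z) ) )` -/
noncomputable def psi2 (T : TilingInstance) (n : ℕ) : Formula :=
  .all 0 (.box (.all 1 (.box (.all 2 (.box
    ((succF n 0 1).imp
      (bigOr (T.H.toList.map fun p =>
        .and (atomQT n p.1 0 2) (atomQT n p.2 1 2)))))))))

/-- `ψ3 := ∀x□∀y□∀z□( succ(x,y) → ⋁_{(t,t')∈V}( Q_t(z,x) ∧ Q_{t'}(z,y) ) )` -/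
noncomputable def psi3 (T : TilingInstance) (n : ℕ) : Formula :=
  .all 0 (.box (.all 1 (.box (.all 2 (.box
    ((succF n 0 1).imp
      (bigOr (T.V.toList.map fun p =>
        .and (atomQT n p.1 2 0) (atomQT n p.2 2 1)))))))))

/-- `□^n φ` : `n` nested boxes -/
def boxIter : ℕ → Formula → Formula
  | 0, φ => φ
  | k + 1, φ => .box (boxIter k φ)

/-- `β^n_T := α^n ∧ □^n( φ1 ∧ □φ1 ∧ □□φ1 ∧ ◇◇◇⊤ ∧ ψ0 ∧ ψ1 ∧ ψ2 ∧ ψ3 )` -/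
noncomputable def betaNT (T : TilingInstance) (n : ℕ) : Formula :=
  .and (alphaN n)
    (boxIter n (bigAnd
      [ phiOne n, .box (phiOne n), .box (.box (phiOne n)),
        .dia (.dia (.dia .top)),
        psi0 T n, psi1 T n, psi2 T n, psi3 T n ]))


theorem incBits (a : ℕ) : ∃ i, a.testBit i = false ∧ (a+1).testBit i = true ∧
    (∀ j < i, a.testBit j = true ∧ (a+1).testBit j = false) ∧
    (∀ j, i < j → (a+1).testBit j = a.testBit j) := by
  induction a using Nat.strong_induction_on with
  | _ a IH =>
    rcases Nat.even_or_odd a with he | ho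
    · have he' : a % 2 = 0 := Nat.even_iff.mp he
      refine ⟨0, ?_, ?_, fun j hj => absurd hj (Nat.not_lt_zero j), ?_⟩
      · simp [Nat.testBit_zero, he']
      · simp [Nat.testBit_zero]; omega
      · intro j hj
        obtain ⟨j, rfl⟩ := Nat.exists_eq_add_of_lt hj
        simp only [Nat.zero_add, Nat.testBit_succ]
        congr 1
        omega
    · have ho' : a % 2 = 1 := Nat.odd_iff.mp ho
      have h2 : a / 2 < a := by omega
      obtain ⟨i, h1, h2', h3, h4⟩ := IH (a / 2) h2
      have ha2 : (a + 1) / 2 = a / 2 + 1 := by omega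
      refine ⟨i + 1, ?_, ?_, ?_, ?_⟩
      · rw [Nat.testBit_succ]; exact h1
      · rw [Nat.testBit_succ, ha2]; exact h2'
      · intro j hj
        match j with
        | 0 =>
          refine ⟨by simp [Nat.testBit_zero, ho'], by simp [Nat.testBit_zero]; omega⟩
        | j + 1 =>
          rw [Nat.testBit_succ, Nat.testBit_succ, ha2]
          exact h3 j (by omega)
      · intro j hj
        match j with
        | j + 1 =>
          rw [Nat.testBit_succ, Nat.testBit_succ, ha2]
          exact h4 j (by omega)

theorem incBits_lt {n a : ℕ} (ha : a + 1 < 2^n) :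
    ∃ i < n, a.testBit i = false ∧ (a+1).testBit i = true ∧
    (∀ j < i, a.testBit j = true ∧ (a+1).testBit j = false) ∧
    (∀ j, i < j → (a+1).testBit j = a.testBit j) := by
  obtain ⟨i, h1, h2, h3, h4⟩ := incBits a
  refine ⟨i, ?_, h1, h2, h3, h4⟩
  by_contra h
  have := Nat.testBit_lt_two_pow (x := a+1) (i := i)
    (lt_of_lt_of_le ha (Nat.pow_le_pow_right (by norm_num) (by omega)))
  simp [this] at h2

theorem eq_succ_of_incBits {a b i : ℕ}
    (h1 : a.testBit i = false) (h2 : b.testBit i = true)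
    (h3 : ∀ j < i, a.testBit j = true ∧ b.testBit j = false)
    (h4 : ∀ j, i < j → b.testBit j = a.testBit j) : b = a + 1 := by
  obtain ⟨k, g1, g2, g3, g4⟩ := incBits a
  have hii : i = k := by
    by_contra hne
    rcases lt_or_gt_of_ne hne with h | h
    · exact absurd (g3 i h).1 (by simp [h1])
    · exact absurd (h3 k h).1 (by simp [g1])
  subst hii
  apply Nat.eq_of_testBit_eq
  intro j
  rcases lt_trichotomy j i with h | h | h
  · rw [(h3 j h).2, (g3 j h).2]
  · subst h; rw [h2, g2]
  · rw [h4 j h, g4 j h]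
/-! ### General satisfaction lemmas -/

section SatLemmas

variable (M : Model) (w : M.W) (σ : ℕ → M.D)

@[simp] lemma sat_and (φ ψ : Formula) :
    M.sat w σ (.and φ ψ) ↔ M.sat w σ φ ∧ M.sat w σ ψ := Iff.rfl

@[simp] lemma sat_or (φ ψ : Formula) :
    M.sat w σ (.or φ ψ) ↔ M.sat w σ φ ∨ M.sat w σ ψ := Iff.rfl

@[simp] lemma sat_neg (φ : Formula) :
    M.sat w σ (.neg φ) ↔ ¬ M.sat w σ φ := Iff.rfl

@[simp] lemma sat_box (φ : Formula) :
    M.sat w σ (.box φ) ↔ ∀ v, M.R w v → M.sat v σ φ := Iff.rfl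

@[simp] lemma sat_dia (φ : Formula) :
    M.sat w σ (.dia φ) ↔ ∃ v, M.R w v ∧ M.sat v σ φ := Iff.rfl

@[simp] lemma sat_ex (x : ℕ) (φ : Formula) :
    M.sat w σ (.ex x φ) ↔ ∃ d ∈ M.dom w, M.sat w (Function.update σ x d) φ := Iff.rfl

@[simp] lemma sat_all (x : ℕ) (φ : Formula) :
    M.sat w σ (.all x φ) ↔ ∀ d ∈ M.dom w, M.sat w (Function.update σ x d) φ := Iff.rfl

@[simp] lemma sat_atom (p : ℕ) (args : List ℕ) :
    M.sat w σ (.atom p args) ↔ args.map σ ∈ M.ρ w p := Iff.rfl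

@[simp] lemma sat_top' : M.sat w σ Formula.top := by
  simp only [Formula.top, sat_or, sat_neg]
  exact (em _).imp id id

@[simp] lemma not_sat_bot : ¬ M.sat w σ Formula.bot := by
  simp only [Formula.bot, sat_and, sat_neg]
  tauto

@[simp] lemma sat_imp (φ ψ : Formula) :
    M.sat w σ (φ.imp ψ) ↔ (M.sat w σ φ → M.sat w σ ψ) := by
  simp only [Formula.imp, sat_or, sat_neg]
  tauto

@[simp] lemma sat_biimp (φ ψ : Formula) :
    M.sat w σ (φ.biimp ψ) ↔ (M.sat w σ φ ↔ M.sat w σ ψ) := by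
  simp only [Formula.biimp, sat_and, sat_imp]
  tauto

@[simp] lemma sat_bigAnd (l : List Formula) :
    M.sat w σ (bigAnd l) ↔ ∀ φ ∈ l, M.sat w σ φ := by
  induction l with
  | nil => simp [bigAnd]
  | cons φ l ih => simp only [bigAnd, List.foldr] at ih ⊢; simp [ih]

@[simp] lemma sat_bigOr (l : List Formula) :
    M.sat w σ (bigOr l) ↔ ∃ φ ∈ l, M.sat w σ φ := by
  induction l with
  | nil => simp [bigOr]
  | cons φ l ih => simp only [bigOr, List.foldr] at ih ⊢; simp [ih]

@[simp] lemma sat_atomPU (i x : ℕ) :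
    M.sat w σ (atomPU i x) ↔ [σ x] ∈ M.ρ w i := by
  simp [atomPU]

@[simp] lemma sat_atomQT (n : ℕ) {m : ℕ} (t : Fin m) (x y : ℕ) :
    M.sat w σ (atomQT n t x y) ↔ [σ x, σ y] ∈ M.ρ w (n + (t : ℕ)) := by
  simp [atomQT]

lemma sat_succF (n x y : ℕ) :
    M.sat w σ (succF n x y) ↔ ∃ i < n,
      [σ x] ∉ M.ρ w i ∧ [σ y] ∈ M.ρ w i ∧
      (∀ j < i, [σ x] ∈ M.ρ w j ∧ [σ y] ∉ M.ρ w j) ∧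
      (∀ j, i < j → j < n → ([σ x] ∈ M.ρ w j ↔ [σ y] ∈ M.ρ w j)) := by
  simp only [succF, sat_bigOr, List.mem_map, List.mem_range]
  constructor
  · rintro ⟨φ, ⟨i, hi, rfl⟩, hs⟩
    rw [sat_bigAnd] at hs
    refine ⟨i, hi, ?_, ?_, ?_, ?_⟩
    · have := hs (Formula.neg (atomPU i x)) (by simp)
      simpa using this
    · have := hs (atomPU i y) (by simp)
      simpa using this
    · intro j hj
      have := hs ((atomPU j x).and (.neg (atomPU j y)))
        (List.mem_append_left _ (List.mem_append_right _
          (List.mem_map_of_mem (by simp [List.mem_filter]; omega))))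
      simpa using this
    · intro j hij hjn
      have := hs ((atomPU j x).biimp (atomPU j y))
        (List.mem_append_right _
          (List.mem_map_of_mem (by simp [List.mem_filter]; omega)))
      simpa using this
  · rintro ⟨i, hi, h1, h2, h3, h4⟩
    refine ⟨_, ⟨i, hi, rfl⟩, ?_⟩
    rw [sat_bigAnd]
    intro φ hφ
    simp only [List.mem_append, List.mem_cons, List.mem_map, List.mem_filter,
      List.mem_range, List.not_mem_nil, or_false, decide_eq_true_eq] at hφ
    rcases hφ with ((rfl | rfl) | ⟨j, ⟨hjn, hji⟩, rfl⟩) | ⟨j, ⟨hjn, hij⟩, rfl⟩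
    · simpa using h1
    · simpa using h2
    · simpa using h3 j hji
    · simpa using h4 j hij hjn

end SatLemmas
/-! ### boxIter / boxLe lemmas -/

lemma sat_boxIter_of_all (M : Model) (φ : Formula)
    (h : ∀ (w : M.W) (σ : ℕ → M.D), M.sat w σ φ) :
    ∀ (k : ℕ) (w : M.W) (σ : ℕ → M.D), M.sat w σ (boxIter k φ)
  | 0, w, σ => h w σ
  | k + 1, w, σ => fun v _ => sat_boxIter_of_all M φ h k v σ

lemma sat_boxLe_of_all (M : Model) (ψ : Formula)
    (h : ∀ (w : M.W) (σ : ℕ → M.D), M.sat w σ ψ) :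
    ∀ (k : ℕ) (w : M.W) (σ : ℕ → M.D), M.sat w σ (boxLe k ψ)
  | 0, w, σ => sat_top' M w σ
  | k + 1, w, σ => ⟨h w σ, fun v _ => sat_boxLe_of_all M ψ h k v σ⟩

lemma sat_boxIter_chain (M : Model) (σ : ℕ → M.D) (φ : Formula) :
    ∀ (k : ℕ) (ws : ℕ → M.W), (∀ j < k, M.R (ws j) (ws (j + 1))) →
      M.sat (ws 0) σ (boxIter k φ) → M.sat (ws k) σ φ := by
  intro k
  induction k with
  | zero => intro ws _ h; exact h
  | succ k ih =>
    intro ws hc h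
    have h1 : M.sat (ws 1) σ (boxIter k φ) := h (ws 1) (hc 0 (by omega))
    exact ih (fun j => ws (j + 1)) (fun j hj => hc (j + 1) (by omega)) h1

lemma sat_boxLe_chain (M : Model) (σ : ℕ → M.D) (ψ : Formula) :
    ∀ (k : ℕ) (ws : ℕ → M.W), (∀ j < k, M.R (ws j) (ws (j + 1))) →
      M.sat (ws 0) σ (boxLe k ψ) → ∀ j < k, M.sat (ws j) σ ψ := by
  intro k
  induction k with
  | zero => intro ws _ _ j hj; omega
  | succ k ih =>
    intro ws hc h j hj
    match j with
    | 0 => exact h.1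
    | j + 1 =>
      have h1 : M.sat (ws 1) σ (boxLe k ψ) := h.2 (ws 1) (hc 0 (by omega))
      exact ih (fun i => ws (i + 1)) (fun i hi => hc (i + 1) (by omega)) h1 j (by omega)

/-! ### The forward model -/

abbrev fwdModel (T : TilingInstance) (n : ℕ) (f : ℕ → ℕ → Fin T.numTiles) : Model where
  W := PUnit
  D := ℕ
  R := fun _ _ => True
  dom := fun _ => Set.univ
  ρ := fun _ p =>
    {l | (p < n ∧ ∃ d, l = [d] ∧ (d % 2 ^ n).testBit p = true) ∨
         (∃ t : Fin T.numTiles, p = n + (t : ℕ) ∧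
            ∃ a b, l = [a, b] ∧ f (a % 2 ^ n) (b % 2 ^ n) = t)}

namespace fwdSec

variable {T : TilingInstance} {n : ℕ} {f : ℕ → ℕ → Fin T.numTiles}

lemma mem_single' {w : (fwdModel T n f).W} {p : ℕ} {d : ℕ}
    (h1 : p < n) (h2 : (d % 2 ^ n).testBit p = true) :
    [d] ∈ (fwdModel T n f).ρ w p :=
  Or.inl ⟨h1, d, rfl, h2⟩

lemma of_mem_single {w : (fwdModel T n f).W} {p : ℕ} {d : ℕ}
    (h : [d] ∈ (fwdModel T n f).ρ w p) :
    p < n ∧ (d % 2 ^ n).testBit p = true := by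
  rcases h with ⟨h1, e, he, hb⟩ | ⟨t, _, a, b, he, _⟩
  · cases he; exact ⟨h1, hb⟩
  · cases he

lemma mem_pair' {w : (fwdModel T n f).W} {a b : ℕ} {t : Fin T.numTiles}
    (h : f (a % 2 ^ n) (b % 2 ^ n) = t) :
    [a, b] ∈ (fwdModel T n f).ρ w (n + (t : ℕ)) :=
  Or.inr ⟨t, rfl, a, b, rfl, h⟩

lemma of_mem_pair {w : (fwdModel T n f).W} {a b : ℕ} {t : Fin T.numTiles}
    (h : [a, b] ∈ (fwdModel T n f).ρ w (n + (t : ℕ))) :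
    f (a % 2 ^ n) (b % 2 ^ n) = t := by
  rcases h with ⟨h1, e, he, hb⟩ | ⟨t', hp, a', b', he, hf⟩
  · cases he
  · cases he
    have : (t : ℕ) = (t' : ℕ) := by omega
    rwa [Fin.val_injective this]

end fwdSec
namespace fwdSec

variable {T : TilingInstance} {n : ℕ} {f : ℕ → ℕ → Fin T.numTiles}

lemma bit_of_not_mem {w : (fwdModel T n f).W} {i : ℕ} {d : ℕ} (hi : i < n)
    (h : [d] ∉ (fwdModel T n f).ρ w i) : (d % 2 ^ n).testBit i = false := by
  cases hb : (d % 2 ^ n).testBit i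
  · rfl
  · exact absurd (mem_single' hi hb) h

lemma sat_phiZero (w : (fwdModel T n f).W) (σ : ℕ → ℕ) :
    (fwdModel T n f).sat w σ (phiZero n) := by
  refine ⟨(0 : ℕ), Set.mem_univ _, fun v _ => ?_⟩
  rw [sat_bigAnd]
  rintro φ hφ
  simp only [List.mem_map, List.mem_range] at hφ
  obtain ⟨i, hi, rfl⟩ := hφ
  simp only [sat_neg, sat_atomPU]
  intro h
  have := (of_mem_single (w := PUnit.unit) h).2
  rw [Function.update_self] at this
  simp at this

lemma sat_phiOne (w : (fwdModel T n f).W) (σ : ℕ → ℕ) :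
    (fwdModel T n f).sat w σ (phiOne n) := by
  intro d _ v _
  rw [sat_bigAnd]
  rintro φ hφ
  simp only [List.mem_map, List.mem_range] at hφ
  obtain ⟨i, hi, rfl⟩ := hφ
  simp only [sat_and, sat_imp, sat_box, sat_neg, sat_atomPU]
  exact ⟨fun h u _ => h, fun h u _ => h⟩

lemma sat_phiTwo (w : (fwdModel T n f).W) (σ : ℕ → ℕ) :
    (fwdModel T n f).sat w σ (phiTwo n) := by
  rintro (d : ℕ) - v -
  rw [sat_bigAnd]
  rintro φ hφ
  simp only [List.mem_map, List.mem_range] at hφ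
  obtain ⟨i, hi, rfl⟩ := hφ
  rw [sat_imp]
  intro hPd
  simp only [sat_neg, sat_atomPU, Function.update_self] at hPd
  have hbit : (d % 2 ^ n).testBit i = false := bit_of_not_mem (w := PUnit.unit) hi hPd
  set e := (d % 2 ^ n) ^^^ 2 ^ i with he
  have hdlt : d % 2 ^ n < 2 ^ n := Nat.mod_lt _ (by positivity)
  have helt : e < 2 ^ n :=
    Nat.xor_lt_two_pow hdlt (Nat.pow_lt_pow_right (by norm_num) hi)
  have hemod : e % 2 ^ n = e := Nat.mod_eq_of_lt helt
  have hebit : ∀ j, (e % 2 ^ n).testBit j =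
      ((d % 2 ^ n).testBit j).xor (decide (i = j)) := by
    intro j
    rw [hemod, he, Nat.testBit_xor, Nat.testBit_two_pow]
  refine ⟨e, Set.mem_univ _, fun u _ => ?_⟩
  rw [sat_and]
  constructor
  · simp only [sat_atomPU, Function.update_self]
    refine mem_single' (w := PUnit.unit) hi ?_
    rw [hebit i, hbit]
    simp
  · rw [sat_bigAnd]
    rintro φ hφ
    simp only [List.mem_map, List.mem_filter, List.mem_range, decide_eq_true_eq] at hφ
    obtain ⟨j, ⟨hjn, hji⟩, rfl⟩ := hφ
    rw [sat_biimp]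
    have h0 : Function.update (Function.update σ 0 d) (1 + i) e 0 = d :=
      Function.update_of_ne (by omega) _ _
    have h1 : Function.update (Function.update σ 0 d) (1 + i) e (1 + i) = e :=
      Function.update_self _ _ _
    simp only [sat_atomPU, h0, h1]
    constructor
    · intro h
      refine mem_single' (w := PUnit.unit) hjn ?_
      rw [hebit j]
      have := (of_mem_single (w := PUnit.unit) h).2
      simp [this, Ne.symm hji]
    · intro h
      have := (of_mem_single (w := PUnit.unit) h).2
      rw [hebit j] at this
      refine mem_single' (w := PUnit.unit) hjn ?_
      have hij : decide (i = j) = false := by simp [Ne.symm hji]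
      rw [hij] at this
      simpa using this

lemma sat_diaTop (w : (fwdModel T n f).W) (σ : ℕ → ℕ) :
    (fwdModel T n f).sat w σ (Formula.top.dia) :=
  ⟨w, trivial, sat_top' _ _ _⟩

lemma sat_psi0 (hf : f 0 0 = T.t0) (w : (fwdModel T n f).W) (σ : ℕ → ℕ) :
    (fwdModel T n f).sat w σ (psi0 T n) := by
  intro d _ v _ u _ z _
  rw [sat_imp]
  intro h
  rw [sat_bigAnd] at h
  have hzero : (Function.update σ 0 d 0 : ℕ) % 2 ^ n = 0 := by
    apply Nat.eq_of_testBit_eq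
    intro j
    rw [Nat.zero_testBit]
    by_cases hj : j < n
    · have := h (.neg (atomPU j 0)) (List.mem_map_of_mem (List.mem_range.mpr hj))
      simp only [sat_neg, sat_atomPU] at this
      exact bit_of_not_mem (w := PUnit.unit) hj this
    · exact Nat.testBit_lt_two_pow (lt_of_lt_of_le
        (Nat.mod_lt _ (by positivity))
        (Nat.pow_le_pow_right (by norm_num) (by omega)))
  simp only [sat_atomQT]
  exact mem_pair' (w := PUnit.unit) (by rw [hzero, hf])

lemma sat_psi1 (w : (fwdModel T n f).W) (σ : ℕ → ℕ) :
    (fwdModel T n f).sat w σ (psi1 T n) := by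
  intro a _ v _ b _ u _ z _
  rw [sat_bigOr]
  set σ' := Function.update (Function.update σ 0 a) 1 b with hσ'
  set t := f ((σ' 0 : ℕ) % 2 ^ n) ((σ' 1 : ℕ) % 2 ^ n) with ht
  refine ⟨_, List.mem_map_of_mem (List.mem_finRange t), ?_⟩
  rw [sat_and]
  constructor
  · simp only [sat_atomQT]
    exact mem_pair' (w := PUnit.unit) rfl
  · rw [sat_bigAnd]
    rintro φ hφ
    simp only [List.mem_map, List.mem_filter, List.mem_finRange, decide_eq_true_eq,
      true_and] at hφ
    obtain ⟨t', ht', rfl⟩ := hφ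
    simp only [sat_neg, sat_atomQT]
    intro h
    exact ht' (by rw [← of_mem_pair (w := PUnit.unit) h])

end fwdSec
namespace fwdSec

variable {T : TilingInstance} {n : ℕ} {f : ℕ → ℕ → Fin T.numTiles}

lemma bits_eq_of_mem_iff {w : (fwdModel T n f).W} {a b : ℕ} {j : ℕ} (hj : j < n)
    (h : [a] ∈ (fwdModel T n f).ρ w j ↔ [b] ∈ (fwdModel T n f).ρ w j) :
    (b % 2 ^ n).testBit j = (a % 2 ^ n).testBit j := by
  cases ha : (a % 2 ^ n).testBit j
  · cases hbb : (b % 2 ^ n).testBit j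
    · rfl
    · exfalso
      have hma := h.mpr (mem_single' hj hbb)
      simp [(of_mem_single hma).2] at ha
  · exact (of_mem_single (h.mp (mem_single' hj ha))).2

lemma succ_decode {w : (fwdModel T n f).W} {σ : ℕ → ℕ} {x y : ℕ}
    (h : (fwdModel T n f).sat w σ (succF n x y)) :
    σ y % 2 ^ n = σ x % 2 ^ n + 1 ∧ σ x % 2 ^ n + 1 < 2 ^ n := by
  rw [sat_succF] at h
  obtain ⟨i, hi, h1, h2, h3, h4⟩ := h
  set A := σ x % 2 ^ n with hA
  set B := σ y % 2 ^ n with hB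
  have hAlt : A < 2 ^ n := Nat.mod_lt _ (by positivity)
  have hBlt : B < 2 ^ n := Nat.mod_lt _ (by positivity)
  have g1 : A.testBit i = false := bit_of_not_mem hi h1
  have g2 : B.testBit i = true := (of_mem_single h2).2
  have g3 : ∀ j < i, A.testBit j = true ∧ B.testBit j = false := by
    intro j hj
    obtain ⟨hm, hnm⟩ := h3 j hj
    exact ⟨(of_mem_single hm).2, bit_of_not_mem (by omega) hnm⟩
  have g4 : ∀ j, i < j → B.testBit j = A.testBit j := by
    intro j hij
    by_cases hjn : j < n
    · exact bits_eq_of_mem_iff hjn (h4 j hij hjn)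
    · rw [Nat.testBit_lt_two_pow (lt_of_lt_of_le hAlt
          (Nat.pow_le_pow_right (by norm_num) (by omega))),
        Nat.testBit_lt_two_pow (lt_of_lt_of_le hBlt
          (Nat.pow_le_pow_right (by norm_num) (by omega)))]
  have hBA : B = A + 1 := eq_succ_of_incBits g1 g2 g3 g4
  exact ⟨hBA, hBA ▸ hBlt⟩

lemma upd3_0 (σ : ℕ → ℕ) (a b c : ℕ) :
    Function.update (Function.update (Function.update σ 0 a) 1 b) 2 c 0 = a := by
  rw [Function.update_of_ne (by norm_num), Function.update_of_ne (by norm_num),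
    Function.update_self]

lemma upd3_1 (σ : ℕ → ℕ) (a b c : ℕ) :
    Function.update (Function.update (Function.update σ 0 a) 1 b) 2 c 1 = b := by
  rw [Function.update_of_ne (by norm_num), Function.update_self]

lemma upd3_2 (σ : ℕ → ℕ) (a b c : ℕ) :
    Function.update (Function.update (Function.update σ 0 a) 1 b) 2 c 2 = c :=
  Function.update_self _ _ _

lemma sat_psi2 (hf : ProperTiling2 T n f) (w : (fwdModel T n f).W) (σ : ℕ → ℕ) :
    (fwdModel T n f).sat w σ (psi2 T n) := by
  rintro (a : ℕ) - v - (b : ℕ) - u - (c : ℕ) - z -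
  rw [sat_imp]
  intro hsucc
  obtain ⟨hBA, hlt⟩ := succ_decode hsucc
  rw [upd3_0, upd3_1] at hBA
  rw [upd3_0] at hlt
  set A := a % 2 ^ n with hA
  set C := c % 2 ^ n with hC
  have hClt : C < 2 ^ n := Nat.mod_lt _ (by positivity)
  have htile : (f A C, f (A + 1) C) ∈ T.H := hf.2.1 A C hlt hClt
  rw [sat_bigOr]
  refine ⟨_, List.mem_map_of_mem (Finset.mem_toList.mpr htile), ?_⟩
  rw [sat_and]
  constructor
  · simp only [sat_atomQT, upd3_0, upd3_2]
    exact mem_pair' (w := PUnit.unit) rfl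
  · simp only [sat_atomQT, upd3_1, upd3_2]
    exact mem_pair' (w := PUnit.unit) (by rw [hBA])

lemma sat_psi3 (hf : ProperTiling2 T n f) (w : (fwdModel T n f).W) (σ : ℕ → ℕ) :
    (fwdModel T n f).sat w σ (psi3 T n) := by
  rintro (a : ℕ) - v - (b : ℕ) - u - (c : ℕ) - z -
  rw [sat_imp]
  intro hsucc
  obtain ⟨hBA, hlt⟩ := succ_decode hsucc
  rw [upd3_0, upd3_1] at hBA
  rw [upd3_0] at hlt
  set A := a % 2 ^ n with hA
  set C := c % 2 ^ n with hC
  have hClt : C < 2 ^ n := Nat.mod_lt _ (by positivity)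
  have htile : (f C A, f C (A + 1)) ∈ T.V := hf.2.2 C A hClt hlt
  rw [sat_bigOr]
  refine ⟨_, List.mem_map_of_mem (Finset.mem_toList.mpr htile), ?_⟩
  rw [sat_and]
  constructor
  · simp only [sat_atomQT, upd3_0, upd3_2]
    exact mem_pair' (w := PUnit.unit) rfl
  · simp only [sat_atomQT, upd3_1, upd3_2]
    exact mem_pair' (w := PUnit.unit) (by rw [hBA])

lemma forward (hf : ProperTiling2 T n f) : Satisfiable (betaNT T n) := by
  refine ⟨fwdModel T n f, ?_, PUnit.unit, fun _ => (0 : ℕ),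
    fun x => Set.mem_univ _, ?_⟩
  · exact ⟨⟨PUnit.unit⟩, ⟨(0 : ℕ)⟩, inferInstanceAs (Countable PUnit),
      inferInstanceAs (Countable ℕ), fun w => ⟨(0 : ℕ), Set.mem_univ _⟩,
      fun _ _ _ => subset_rfl, fun w p l _ d _ => Set.mem_univ d⟩
  · rw [betaNT, sat_and]
    constructor
    · rw [alphaN, sat_and]
      refine ⟨sat_phiZero _ _, sat_boxLe_of_all _ _ (fun w σ => ?_) n _ _⟩
      exact ⟨sat_phiOne w σ, sat_phiTwo w σ, sat_diaTop w σ⟩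
    · refine sat_boxIter_of_all _ _ (fun w σ => ?_) n _ _
      rw [sat_bigAnd]
      intro φ hφ
      simp only [List.mem_cons, List.not_mem_nil, or_false] at hφ
      rcases hφ with rfl | rfl | rfl | rfl | rfl | rfl | rfl | rfl
      · exact sat_phiOne w σ
      · exact fun v _ => sat_phiOne v σ
      · exact fun v _ u _ => sat_phiOne u σ
      · exact ⟨w, trivial, w, trivial, w, trivial, sat_top' _ _ _⟩
      · exact sat_psi0 hf.1 w σ
      · exact sat_psi1 w σ
      · exact sat_psi2 hf w σ
      · exact sat_psi3 hf w σ

end fwdSec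
/-! ### Extraction (spec) lemmas for the backward direction -/

section Specs

variable {M : Model} {n : ℕ} {T : TilingInstance} {w : M.W} {σ : ℕ → M.D}

lemma upd2_0 {α : Type} (σ : ℕ → α) (a b : α) :
    Function.update (Function.update σ 0 a) 1 b 0 = a := by
  rw [Function.update_of_ne (by norm_num), Function.update_self]

lemma upd2_1 {α : Type} (σ : ℕ → α) (a b : α) :
    Function.update (Function.update σ 0 a) 1 b 1 = b :=
  Function.update_self _ _ _

lemma gupd3_0 {α : Type} (σ : ℕ → α) (a b c : α) :
    Function.update (Function.update (Function.update σ 0 a) 1 b) 2 c 0 = a := by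
  rw [Function.update_of_ne (by norm_num), upd2_0]

lemma gupd3_1 {α : Type} (σ : ℕ → α) (a b c : α) :
    Function.update (Function.update (Function.update σ 0 a) 1 b) 2 c 1 = b := by
  rw [Function.update_of_ne (by norm_num), upd2_1]

lemma gupd3_2 {α : Type} (σ : ℕ → α) (a b c : α) :
    Function.update (Function.update (Function.update σ 0 a) 1 b) 2 c 2 = c :=
  Function.update_self _ _ _

lemma phiZero_spec (h : M.sat w σ (phiZero n)) :
    ∃ d ∈ M.dom w, ∀ v, M.R w v → ∀ i < n, [d] ∉ M.ρ v i := by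
  obtain ⟨d, hd, hbox⟩ := h
  refine ⟨d, hd, fun v hv i hi => ?_⟩
  have := hbox v hv
  rw [sat_bigAnd] at this
  have h2 := this (.neg (atomPU i 0)) (List.mem_map_of_mem (List.mem_range.mpr hi))
  simpa [Function.update_self] using h2

lemma phiOne_spec (h : M.sat w σ (phiOne n)) :
    ∀ d ∈ M.dom w, ∀ v, M.R w v → ∀ u, M.R v u → ∀ i < n,
      ([d] ∈ M.ρ v i ↔ [d] ∈ M.ρ u i) := by
  intro d hd v hv u hu i hi
  have h2 := h d hd v hv
  rw [sat_bigAnd] at h2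
  have h3 := h2 _ (List.mem_map_of_mem (f := fun i => Formula.and
    ((atomPU i 0).imp (.box (atomPU i 0)))
    ((Formula.neg (atomPU i 0)).imp (.box (.neg (atomPU i 0))))) (List.mem_range.mpr hi))
  simp only [sat_and, sat_imp, sat_box, sat_neg, sat_atomPU, Function.update_self] at h3
  constructor
  · intro hm; exact h3.1 hm u hu
  · intro hm
    by_contra hnm
    exact h3.2 hnm u hu hm

lemma phiTwo_spec (h : M.sat w σ (phiTwo n)) :
    ∀ d ∈ M.dom w, ∀ v, M.R w v → ∀ i < n, [d] ∉ M.ρ v i →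
      ∃ e ∈ M.dom v, ∀ u, M.R v u →
        [e] ∈ M.ρ u i ∧ ∀ j < n, j ≠ i → ([d] ∈ M.ρ u j ↔ [e] ∈ M.ρ u j) := by
  intro d hd v hv i hi hni
  have h2 := h d hd v hv
  rw [sat_bigAnd] at h2
  have h3 := h2 _ (List.mem_map_of_mem (f := fun i => (Formula.neg (atomPU i 0)).imp
    (.ex (1 + i) (.box (.and (atomPU i (1 + i))
      (bigAnd (((List.range n).filter (fun j => decide (j ≠ i))).map fun j =>
        (atomPU j 0).biimp (atomPU j (1 + i))))))))
    (List.mem_range.mpr hi))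
  rw [sat_imp] at h3
  have h4 := h3 (by simpa [Function.update_self] using hni)
  obtain ⟨e, he, hbox⟩ := h4
  refine ⟨e, he, fun u hu => ?_⟩
  have h5 := hbox u hu
  rw [sat_and] at h5
  constructor
  · have := h5.1
    simpa [Function.update_self] using this
  · intro j hj hji
    have h6 := h5.2
    rw [sat_bigAnd] at h6
    have h7 := h6 _ (List.mem_map_of_mem (f := fun j => (atomPU j 0).biimp (atomPU j (1 + i)))
      (by rw [List.mem_filter]; exact ⟨List.mem_range.mpr hj, by simpa using hji⟩))
    simp only [sat_biimp, sat_atomPU] at h7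
    have e0 : Function.update (Function.update σ 0 d) (1 + i) e 0 = d :=
      Function.update_of_ne (by omega) _ _
    have e1 : Function.update (Function.update σ 0 d) (1 + i) e (1 + i) = e :=
      Function.update_self _ _ _
    rwa [e0, e1] at h7

lemma psi0_spec (h : M.sat w σ (psi0 T n)) :
    ∀ d ∈ M.dom w, ∀ v1, M.R w v1 → ∀ v2, M.R v1 v2 → ∀ v3, M.R v2 v3 →
      (∀ i < n, [d] ∉ M.ρ v3 i) → [d, d] ∈ M.ρ v3 (n + (T.t0 : ℕ)) := by
  intro d hd v1 h1 v2 h2 v3 h3 hbits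
  have h4 := h d hd v1 h1 v2 h2 v3 h3
  rw [sat_imp] at h4
  have h5 : M.sat v3 (Function.update σ 0 d)
      (bigAnd ((List.range n).map fun i => .neg (atomPU i 0))) := by
    rw [sat_bigAnd]
    rintro φ hφ
    simp only [List.mem_map, List.mem_range] at hφ
    obtain ⟨i, hi, rfl⟩ := hφ
    simpa [Function.update_self] using hbits i hi
  have h6 := h4 h5
  simpa [Function.update_self] using h6

lemma psi1_spec (h : M.sat w σ (psi1 T n)) :
    ∀ a ∈ M.dom w, ∀ v1, M.R w v1 → ∀ b ∈ M.dom v1, ∀ v2, M.R v1 v2 →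
      ∀ v3, M.R v2 v3 → ∃ t : Fin T.numTiles, [a, b] ∈ M.ρ v3 (n + (t : ℕ)) ∧
        ∀ t' : Fin T.numTiles, [a, b] ∈ M.ρ v3 (n + (t' : ℕ)) → t' = t := by
  intro a ha v1 h1 b hb v2 h2 v3 h3
  have h4 := h a ha v1 h1 b hb v2 h2 v3 h3
  rw [sat_bigOr] at h4
  obtain ⟨φ, hφ, hsat⟩ := h4
  simp only [List.mem_map, List.mem_finRange] at hφ
  obtain ⟨t, -, rfl⟩ := hφ
  rw [sat_and] at hsat
  obtain ⟨hQ, hU⟩ := hsat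
  simp only [sat_atomQT, upd2_0, upd2_1] at hQ
  refine ⟨t, hQ, fun t' ht' => ?_⟩
  by_contra hne
  rw [sat_bigAnd] at hU
  have h5 := hU _ (List.mem_map_of_mem (f := fun t' => Formula.neg (atomQT n t' 0 1))
    (by rw [List.mem_filter]; exact ⟨List.mem_finRange t', by simpa using hne⟩))
  simp only [sat_neg, sat_atomQT, upd2_0, upd2_1] at h5
  exact h5 ht'

lemma psi2_spec (h : M.sat w σ (psi2 T n)) :
    ∀ a ∈ M.dom w, ∀ v1, M.R w v1 → ∀ b ∈ M.dom v1, ∀ v2, M.R v1 v2 →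
      ∀ c ∈ M.dom v2, ∀ v3, M.R v2 v3 →
      (∃ i < n, [a] ∉ M.ρ v3 i ∧ [b] ∈ M.ρ v3 i ∧
        (∀ j < i, [a] ∈ M.ρ v3 j ∧ [b] ∉ M.ρ v3 j) ∧
        (∀ j, i < j → j < n → ([a] ∈ M.ρ v3 j ↔ [b] ∈ M.ρ v3 j))) →
      ∃ p ∈ T.H, [a, c] ∈ M.ρ v3 (n + (p.1 : ℕ)) ∧ [b, c] ∈ M.ρ v3 (n + (p.2 : ℕ)) := by
  intro a ha v1 h1 b hb v2 h2 c hc v3 h3 hsucc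
  have h4 := h a ha v1 h1 b hb v2 h2 c hc v3 h3
  rw [sat_imp] at h4
  have h5 : M.sat v3 (Function.update (Function.update (Function.update σ 0 a) 1 b) 2 c)
      (succF n 0 1) := by
    rw [sat_succF]
    simpa only [gupd3_0, gupd3_1] using hsucc
  have h6 := h4 h5
  rw [sat_bigOr] at h6
  obtain ⟨φ, hφ, hsat⟩ := h6
  simp only [List.mem_map] at hφ
  obtain ⟨p, hp, rfl⟩ := hφ
  rw [sat_and] at hsat
  simp only [sat_atomQT, gupd3_0, gupd3_1, gupd3_2] at hsat
  exact ⟨p, Finset.mem_toList.mp hp, hsat.1, hsat.2⟩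

lemma psi3_spec (h : M.sat w σ (psi3 T n)) :
    ∀ a ∈ M.dom w, ∀ v1, M.R w v1 → ∀ b ∈ M.dom v1, ∀ v2, M.R v1 v2 →
      ∀ c ∈ M.dom v2, ∀ v3, M.R v2 v3 →
      (∃ i < n, [a] ∉ M.ρ v3 i ∧ [b] ∈ M.ρ v3 i ∧
        (∀ j < i, [a] ∈ M.ρ v3 j ∧ [b] ∉ M.ρ v3 j) ∧
        (∀ j, i < j → j < n → ([a] ∈ M.ρ v3 j ↔ [b] ∈ M.ρ v3 j))) →
      ∃ p ∈ T.V, [c, a] ∈ M.ρ v3 (n + (p.1 : ℕ)) ∧ [c, b] ∈ M.ρ v3 (n + (p.2 : ℕ)) := by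
  intro a ha v1 h1 b hb v2 h2 c hc v3 h3 hsucc
  have h4 := h a ha v1 h1 b hb v2 h2 c hc v3 h3
  rw [sat_imp] at h4
  have h5 : M.sat v3 (Function.update (Function.update (Function.update σ 0 a) 1 b) 2 c)
      (succF n 0 1) := by
    rw [sat_succF]
    simpa only [gupd3_0, gupd3_1] using hsucc
  have h6 := h4 h5
  rw [sat_bigOr] at h6
  obtain ⟨φ, hφ, hsat⟩ := h6
  simp only [List.mem_map] at hφ
  obtain ⟨p, hp, rfl⟩ := hφ
  rw [sat_and] at hsat
  simp only [sat_atomQT, gupd3_0, gupd3_1, gupd3_2] at hsat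
  exact ⟨p, Finset.mem_toList.mp hp, hsat.1, hsat.2⟩

end Specs
/-! ### Backward direction -/

lemma sat_boxLe_chain' (M : Model) (σ : ℕ → M.D) (ψ : Formula) :
    ∀ (k : ℕ) (ws : ℕ → M.W), M.sat (ws 0) σ (boxLe k ψ) →
      ∀ j < k, (∀ i < j, M.R (ws i) (ws (i + 1))) → M.sat (ws j) σ ψ := by
  intro k
  induction k with
  | zero => intro ws _ j hj; omega
  | succ k ih =>
    intro ws h j hj hc
    match j with
    | 0 => exact h.1
    | j + 1 =>
      have h1 : M.sat (ws 1) σ (boxLe k ψ) := h.2 (ws 1) (hc 0 (by omega))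
      exact ih (fun i => ws (i + 1)) h1 j (by omega) (fun i hi => hc (i + 1) (by omega))

lemma backward (T : TilingInstance) (n : ℕ) (hS : Satisfiable (betaNT T n)) :
    ∃ f : ℕ → ℕ → Fin T.numTiles, ProperTiling2 T n f := by
  classical
  obtain ⟨M, hinc, w0, σ, hrel, hsat⟩ := hS
  obtain ⟨-, -, -, -, -, hmono, -⟩ := hinc
  rw [betaNT, sat_and] at hsat
  obtain ⟨hα, hβ⟩ := hsat
  rw [alphaN, sat_and] at hα
  obtain ⟨hα0, hαLe⟩ := hα
  -- chain of length n
  have hchain : ∀ m, m ≤ n → ∃ ws : ℕ → M.W, ws 0 = w0 ∧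
      ∀ k < m, M.R (ws k) (ws (k + 1)) := by
    intro m hm
    induction m with
    | zero => exact ⟨fun _ => w0, rfl, fun k hk => absurd hk (Nat.not_lt_zero k)⟩
    | succ m ih =>
      obtain ⟨ws, h0, hc⟩ := ih (by omega)
      have hA := sat_boxLe_chain' M σ _ n ws (by rw [h0]; exact hαLe) m (by omega) hc
      rw [sat_and, sat_and] at hA
      obtain ⟨v, hv, -⟩ := hA.2.2
      refine ⟨fun k => if k ≤ m then ws k else v, by simp [h0], ?_⟩
      intro k hk
      by_cases hkm : k < m
      · simpa only [if_pos (by omega : k ≤ m), if_pos (by omega : k + 1 ≤ m)] using hc k hkm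
      · have hke : k = m := by omega
        subst hke
        simpa only [if_pos (le_refl k), if_neg (by omega : ¬ (k + 1 ≤ k))] using hv
  obtain ⟨ws0, h00, hc0⟩ := hchain n le_rfl
  have hbig := sat_boxIter_chain M σ _ n ws0 hc0 (by rw [h00]; exact hβ)
  rw [sat_bigAnd] at hbig
  have hdia := hbig (.dia (.dia (.dia .top))) (by simp)
  rw [sat_dia] at hdia
  obtain ⟨v1, hv1, hdia⟩ := hdia
  rw [sat_dia] at hdia
  obtain ⟨v2, hv2, hdia⟩ := hdia
  rw [sat_dia] at hdia
  obtain ⟨v3, hv3, -⟩ := hdia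
  -- the full chain
  set ws : ℕ → M.W := fun k => if k ≤ n then ws0 k else
    if k = n + 1 then v1 else if k = n + 2 then v2 else v3 with hws
  have hwsn : ws n = ws0 n := if_pos le_rfl
  have hws0' : ws 0 = w0 := by rw [hws]; simp [h00]
  have hchainfull : ∀ k < n + 3, M.R (ws k) (ws (k + 1)) := by
    intro k hk
    rcases lt_trichotomy k n with h | h | h
    · simpa only [hws, if_pos (by omega : k ≤ n), if_pos (by omega : k + 1 ≤ n)]
        using hc0 k h
    · subst h
      simpa only [hws, if_pos (le_refl k), if_neg (by omega : ¬ (k + 1 ≤ k)),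
        if_pos rfl, if_true] using hv1
    · rcases (by omega : k = n + 1 ∨ k = n + 2) with hke | hke <;> subst hke
      · simpa only [hws, if_neg (by omega : ¬ (n + 1 ≤ n)), if_pos rfl, if_true,
          if_neg (by omega : ¬ (n + 2 ≤ n)), if_neg (by omega : ¬ (n + 2 = n + 1)),
          if_pos rfl, if_true] using hv2
      · simpa only [hws, if_neg (by omega : ¬ (n + 2 ≤ n)),
          if_neg (by omega : ¬ (n + 2 = n + 1)), if_pos rfl, if_true,
          if_neg (by omega : ¬ (n + 3 ≤ n)), if_neg (by omega : ¬ (n + 3 = n + 1)),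
          if_neg (by omega : ¬ (n + 3 = n + 2))] using hv3
  -- φ1 facts
  have hψA : ∀ m < n, M.sat (ws m) σ
      (.and (phiOne n) (.and (phiTwo n) (.dia .top))) := by
    intro m hm
    exact sat_boxLe_chain' M σ _ n ws (by rw [hws0']; exact hαLe) m hm
      (fun i hi => hchainfull i (by omega))
  have hphi1 : ∀ m ≤ n + 2, M.sat (ws m) σ (phiOne n) := by
    intro m hm
    rcases lt_trichotomy m n with h | h | h
    · exact (hψA m h).1
    · rw [h, hwsn]
      exact hbig (phiOne n) (by simp)
    · have hb1 := hbig (.box (phiOne n)) (by simp)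
      have hb2 := hbig (.box (.box (phiOne n))) (by simp)
      rcases (by omega : m = n + 1 ∨ m = n + 2) with hke | hke <;> subst hke
      · exact hb1 (ws (n + 1)) (by rw [← hwsn]; exact hchainfull n (by omega))
      · exact hb2 (ws (n + 1)) (by rw [← hwsn]; exact hchainfull n (by omega))
          (ws (n + 2)) (hchainfull (n + 1) (by omega))
  have hphi2 : ∀ m < n, M.sat (ws m) σ (phiTwo n) := fun m hm => (hψA m hm).2.1
  -- domain monotonicity along the chain
  have hdomMono : ∀ a b, a ≤ b → b ≤ n + 3 → M.dom (ws a) ⊆ M.dom (ws b) := by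
    intro a b hab hb
    induction b with
    | zero =>
      have ha0 : a = 0 := by omega
      subst ha0
      exact subset_rfl
    | succ b ih =>
      by_cases hab' : a = b + 1
      · subst hab'; exact subset_rfl
      · exact subset_trans (ih (by omega) (by omega))
          (hmono _ _ (hchainfull b (by omega)))
  -- pattern stability
  have hstab : ∀ (d : M.D) (m s : ℕ), d ∈ M.dom (ws m) → m + 1 + s ≤ n + 3 →
      ∀ i < n, ([d] ∈ M.ρ (ws (m + 1)) i ↔ [d] ∈ M.ρ (ws (m + 1 + s)) i) := by
    intro d m s
    induction s with
    | zero => intro _ _ i _; rfl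
    | succ s ih =>
      intro hd hs i hi
      have h1 := ih hd (by omega) i hi
      have h2 := phiOne_spec (hphi1 (m + s) (by omega)) d
        (hdomMono m (m + s) (by omega) (by omega) hd)
        (ws (m + s + 1)) (hchainfull (m + s) (by omega))
        (ws (m + s + 2)) (hchainfull (m + s + 1) (by omega)) i hi
      have e1 : m + 1 + s = m + s + 1 := by omega
      have e2 : m + 1 + (s + 1) = m + s + 2 := by omega
      rw [e2]
      rw [e1] at h1
      exact h1.trans h2
  have hstab' : ∀ (d : M.D) (m : ℕ), d ∈ M.dom (ws m) → ∀ b, m + 1 ≤ b → b ≤ n + 3 →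
      ∀ i < n, ([d] ∈ M.ρ (ws (m + 1)) i ↔ [d] ∈ M.ρ (ws b) i) := by
    intro d m hd b hb1 hb2 i hi
    have := hstab d m (b - (m + 1)) hd (by omega) i hi
    rwa [show m + 1 + (b - (m + 1)) = b by omega] at this
  -- main claim: all bit patterns realized
  have main : ∀ k, ∀ S : Finset (Fin n), S.card = k → ∃ d ∈ M.dom (ws k),
      ∀ m, k < m → m ≤ n + 3 → ∀ i : Fin n, ([d] ∈ M.ρ (ws m) (i : ℕ) ↔ i ∈ S) := by
    intro k
    induction k with
    | zero =>
      intro S hScard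
      rw [Finset.card_eq_zero] at hScard
      subst hScard
      obtain ⟨d0, hd0, hpat⟩ := phiZero_spec hα0
      have hd0' : d0 ∈ M.dom (ws 0) := by rw [hws0']; exact hd0
      refine ⟨d0, hd0', fun m hm hm3 i => ?_⟩
      simp only [Finset.notMem_empty, iff_false]
      have hbase : [d0] ∉ M.ρ (ws 1) (i : ℕ) := by
        have := hpat (ws 1) (by rw [← hws0']; exact hchainfull 0 (by omega)) (i : ℕ) i.2
        exact this
      intro hmem
      exact hbase ((hstab' d0 0 hd0' m (by omega) hm3 (i : ℕ) i.2).mpr hmem)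
    | succ k ih =>
      intro S hScard
      have hSne : S.Nonempty := by rw [← Finset.card_pos, hScard]; omega
      obtain ⟨i0, hi0⟩ := hSne
      have hcard : (S.erase i0).card = k := by
        rw [Finset.card_erase_of_mem hi0, hScard]
        omega
      obtain ⟨d', hd', hpat'⟩ := ih (S.erase i0) hcard
      have hkn : k + 1 ≤ n := by
        rw [← hScard]
        simpa using Finset.card_le_univ S
      have hnot : [d'] ∉ M.ρ (ws (k + 1)) ((i0 : ℕ)) := by
        intro hmem
        have := (hpat' (k + 1) (by omega) (by omega) i0).mp hmem
        simp at this
      obtain ⟨e, he, hbox⟩ := phiTwo_spec (hphi2 k (by omega)) d' hd'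
        (ws (k + 1)) (hchainfull k (by omega)) (i0 : ℕ) i0.2 hnot
      have hstep := hbox (ws (k + 2)) (hchainfull (k + 1) (by omega))
      have hk2 : ∀ i : Fin n, ([e] ∈ M.ρ (ws (k + 2)) (i : ℕ) ↔ i ∈ S) := by
        intro i
        by_cases hii : i = i0
        · subst hii
          simp only [hi0, iff_true]
          exact hstep.1
        · have hne : (i : ℕ) ≠ (i0 : ℕ) := fun h => hii (Fin.val_injective h)
          rw [← hstep.2 (i : ℕ) i.2 hne, hpat' (k + 2) (by omega) (by omega) i]
          simp [Finset.mem_erase, hii]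
      refine ⟨e, he, fun m hm hm3 i => ?_⟩
      have hs := hstab' e (k + 1) he m (by omega) hm3 (i : ℕ) i.2
      rw [← hs]
      exact hk2 i
  -- elements for each number x < 2^n
  have hg : ∀ S : Finset (Fin n), ∃ d ∈ M.dom (ws n), ∀ m, n < m → m ≤ n + 3 →
      ∀ i : Fin n, ([d] ∈ M.ρ (ws m) (i : ℕ) ↔ i ∈ S) := by
    intro S
    obtain ⟨d, hd, hp⟩ := main S.card S rfl
    have hcle : S.card ≤ n := by simpa using Finset.card_le_univ S
    exact ⟨d, hdomMono _ _ hcle (by omega) hd,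
      fun m hm hm3 i => hp m (by omega) hm3 i⟩
  choose g hgdom hgpat using hg
  have h2pos : 0 < 2 ^ n := by positivity
  set bitSet : ℕ → Finset (Fin n) :=
    fun x => Finset.univ.filter (fun i : Fin n => x.testBit (i : ℕ)) with hbitSet
  have hgpat3 : ∀ (x j : ℕ), j < n →
      ([g (bitSet x)] ∈ M.ρ (ws (n + 3)) j ↔ x.testBit j = true) := by
    intro x j hj
    have := hgpat (bitSet x) (n + 3) (by omega) (by omega) ⟨j, hj⟩
    rw [this, hbitSet]
    simp
  have hψ1 := hbig (psi1 T n) (by simp)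
  rw [← hwsn] at hψ1
  have htl : ∀ a ∈ M.dom (ws n), ∀ b ∈ M.dom (ws n),
      ∃ t : Fin T.numTiles, [a, b] ∈ M.ρ (ws (n + 3)) (n + (t : ℕ)) ∧
        ∀ t' : Fin T.numTiles, [a, b] ∈ M.ρ (ws (n + 3)) (n + (t' : ℕ)) → t' = t := by
    intro a ha b hb
    exact psi1_spec hψ1 a ha (ws (n + 1)) (hchainfull n (by omega))
      b (hdomMono n (n + 1) (by omega) (by omega) hb)
      (ws (n + 2)) (hchainfull (n + 1) (by omega))
      (ws (n + 3)) (hchainfull (n + 2) (by omega))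
  choose tl htl1 htl2 using htl
  refine ⟨fun x y => if h : x < 2 ^ n ∧ y < 2 ^ n then
      tl (g (bitSet x)) (hgdom _) (g (bitSet y)) (hgdom _) else T.t0, ?_, ?_, ?_⟩
  · -- f 0 0 = t0
    dsimp only
    rw [dif_pos ⟨h2pos, h2pos⟩]
    have hψ0 := hbig (psi0 T n) (by simp)
    rw [← hwsn] at hψ0
    have hbits0 : ∀ i < n, [g (bitSet 0)] ∉ M.ρ (ws (n + 3)) i := by
      intro i hi hmemi
      rw [hgpat3 0 i hi] at hmemi
      simp [Nat.zero_testBit] at hmemi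
    have hmem := psi0_spec hψ0 (g (bitSet 0)) (hgdom _)
      (ws (n + 1)) (hchainfull n (by omega)) (ws (n + 2)) (hchainfull (n + 1) (by omega))
      (ws (n + 3)) (hchainfull (n + 2) (by omega)) hbits0
    exact (htl2 _ (hgdom _) _ (hgdom _) T.t0 hmem).symm
  · -- horizontal constraints
    intro x y hx hy
    dsimp only
    have hx' : x < 2 ^ n := by omega
    have hsucc : ∃ i < n, [g (bitSet x)] ∉ M.ρ (ws (n + 3)) i ∧
        [g (bitSet (x + 1))] ∈ M.ρ (ws (n + 3)) i ∧
        (∀ j < i, [g (bitSet x)] ∈ M.ρ (ws (n + 3)) j ∧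
          [g (bitSet (x + 1))] ∉ M.ρ (ws (n + 3)) j) ∧
        (∀ j, i < j → j < n → ([g (bitSet x)] ∈ M.ρ (ws (n + 3)) j ↔
          [g (bitSet (x + 1))] ∈ M.ρ (ws (n + 3)) j)) := by
      obtain ⟨i, hi, b1, b2, b3, b4⟩ := incBits_lt hx
      refine ⟨i, hi, ?_, ?_, ?_, ?_⟩
      · rw [hgpat3 x i hi]
        simp [b1]
      · rw [hgpat3 (x + 1) i hi]
        exact b2
      · intro j hj
        refine ⟨(hgpat3 x j (by omega)).mpr (b3 j hj).1, ?_⟩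
        rw [hgpat3 (x + 1) j (by omega)]
        simp [(b3 j hj).2]
      · intro j hij hjn
        rw [hgpat3 x j hjn, hgpat3 (x + 1) j hjn, b4 j hij]
    have hψ2 := hbig (psi2 T n) (by simp)
    rw [← hwsn] at hψ2
    obtain ⟨p, hpH, hm1, hm2⟩ := psi2_spec hψ2 (g (bitSet x)) (hgdom _)
      (ws (n + 1)) (hchainfull n (by omega))
      (g (bitSet (x + 1))) (hdomMono n (n + 1) (by omega) (by omega) (hgdom _))
      (ws (n + 2)) (hchainfull (n + 1) (by omega))
      (g (bitSet y)) (hdomMono n (n + 2) (by omega) (by omega) (hgdom _))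
      (ws (n + 3)) (hchainfull (n + 2) (by omega)) hsucc
    rw [dif_pos ⟨hx', hy⟩, dif_pos ⟨hx, hy⟩]
    have e1 := htl2 _ (hgdom (bitSet x)) _ (hgdom (bitSet y)) p.1 hm1
    have e2 := htl2 _ (hgdom (bitSet (x + 1))) _ (hgdom (bitSet y)) p.2 hm2
    rw [← e1, ← e2]
    simpa using hpH
  · -- vertical constraints
    intro x y hx hy
    dsimp only
    have hy' : y < 2 ^ n := by omega
    have hsucc : ∃ i < n, [g (bitSet y)] ∉ M.ρ (ws (n + 3)) i ∧
        [g (bitSet (y + 1))] ∈ M.ρ (ws (n + 3)) i ∧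
        (∀ j < i, [g (bitSet y)] ∈ M.ρ (ws (n + 3)) j ∧
          [g (bitSet (y + 1))] ∉ M.ρ (ws (n + 3)) j) ∧
        (∀ j, i < j → j < n → ([g (bitSet y)] ∈ M.ρ (ws (n + 3)) j ↔
          [g (bitSet (y + 1))] ∈ M.ρ (ws (n + 3)) j)) := by
      obtain ⟨i, hi, b1, b2, b3, b4⟩ := incBits_lt hy
      refine ⟨i, hi, ?_, ?_, ?_, ?_⟩
      · rw [hgpat3 y i hi]
        simp [b1]
      · rw [hgpat3 (y + 1) i hi]
        exact b2
      · intro j hj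
        refine ⟨(hgpat3 y j (by omega)).mpr (b3 j hj).1, ?_⟩
        rw [hgpat3 (y + 1) j (by omega)]
        simp [(b3 j hj).2]
      · intro j hij hjn
        rw [hgpat3 y j hjn, hgpat3 (y + 1) j hjn, b4 j hij]
    have hψ3 := hbig (psi3 T n) (by simp)
    rw [← hwsn] at hψ3
    obtain ⟨p, hpV, hm1, hm2⟩ := psi3_spec hψ3 (g (bitSet y)) (hgdom _)
      (ws (n + 1)) (hchainfull n (by omega))
      (g (bitSet (y + 1))) (hdomMono n (n + 1) (by omega) (by omega) (hgdom _))
      (ws (n + 2)) (hchainfull (n + 1) (by omega))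
      (g (bitSet x)) (hdomMono n (n + 2) (by omega) (by omega) (hgdom _))
      (ws (n + 3)) (hchainfull (n + 2) (by omega)) hsucc
    rw [dif_pos ⟨hx, hy'⟩, dif_pos ⟨hx, hy⟩]
    have e1 := htl2 _ (hgdom (bitSet x)) _ (hgdom (bitSet y)) p.1 hm1
    have e2 := htl2 _ (hgdom (bitSet x)) _ (hgdom (bitSet (y + 1))) p.2 hm2
    rw [← e1, ← e2]
    simpa using hpV

/-- For every tiling instance `T` and every `n ∈ ℕ`, there is
a proper tiling of the `2^n × 2^n` grid iff the `ABEB` formula `β^n_T` is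
satisfiable in an increasing domain model. -/
theorem exponential_tiling_iff_betaNT_satisfiable (T : TilingInstance) (n : ℕ) :
    (∃ f : ℕ → ℕ → Fin T.numTiles, ProperTiling2 T n f) ↔ Satisfiable (betaNT T n) := by
  constructor
  · rintro ⟨f, hf⟩
    exact fwdSec.forward hf
  · exact backward T n
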